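/- Let X be a finite metric graph (a finite graph with a positive length assigned to each edge), and let m, l₀ > 0. If X has an edge e of length less than l₀, then e is contained in a connected subgraph S such that: (1) every edge e' adjacent to S but not contained in S satisfies len(e')/len(S) > m, and (2) len(S) < l₀·(m+1)^(|S|-1), where |S| is the number of edges of S and len(S) is the sum of the lengths of the edges of S. -/

import Mathlib

/-- A finite metric graph: finite vertex and edge types, each edge has an unordered pair
of (possibly equal) endpoints, and each edge has a positive length. -/
structure MetricGraph where
  V : Type
  E : Type
  [fintV : Fintype V]
  [fintE : Fintype E]
  [decE : DecidableEq E]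
  ends : E → Sym2 V
  len : E → ℝ
  len_pos : ∀ e, 0 < len e

namespace MetricGraph

variable (G : MetricGraph)

instance : Fintype G.E := G.fintE
instance : DecidableEq G.E := G.decE

/-- Two edges touch if they share a vertex. -/
def Touches (e e' : G.E) : Prop := ∃ v, v ∈ G.ends e ∧ v ∈ G.ends e'

/-- An edge is adjacent to a set of edges if it shares a vertex with one of them. -/
def AdjTo (e : G.E) (S : Finset G.E) : Prop := ∃ e' ∈ S, G.Touches e e'

/-- A set of edges forms a connected subgraph: any two of its edges are joined by a
chain of pairwise touching edges lying in the set. -/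
def ConnectedEdges (S : Finset G.E) : Prop :=
  ∀ e ∈ S, ∀ e' ∈ S,
    Relation.ReflTransGen (fun x y => x ∈ S ∧ y ∈ S ∧ G.Touches x y) e e'

/-- The length of a subgraph: the sum of the lengths of its edges. -/
def lenOf (S : Finset G.E) : ℝ := ∑ e ∈ S, G.len e

end MetricGraph

namespace MetricGraph

lemma touches_symm (G : MetricGraph) {a b : G.E} (h : G.Touches a b) : G.Touches b a := by
  obtain ⟨v, h1, h2⟩ := h; exact ⟨v, h2, h1⟩

lemma lenOf_pos (G : MetricGraph) {S : Finset G.E} (hS : S.Nonempty) : 0 < G.lenOf S :=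
  Finset.sum_pos (fun i _ => G.len_pos i) hS

lemma connected_insert (G : MetricGraph) {S : Finset G.E} (hS : G.ConnectedEdges S)
    {e' : G.E} (he' : G.AdjTo e' S) : G.ConnectedEdges (insert e' S) := by
  obtain ⟨f, hf, htf⟩ := he'
  have mono : ∀ a b, Relation.ReflTransGen (fun x y => x ∈ S ∧ y ∈ S ∧ G.Touches x y) a b →
      Relation.ReflTransGen (fun x y => x ∈ insert e' S ∧ y ∈ insert e' S ∧ G.Touches x y) a b :=
    fun a b h => Relation.ReflTransGen.mono (fun x y ⟨h1, h2, h3⟩ =>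
      ⟨Finset.mem_insert_of_mem h1, Finset.mem_insert_of_mem h2, h3⟩) a b h
  intro a ha b hb
  rcases Finset.mem_insert.mp ha with rfl | ha2
  · rcases Finset.mem_insert.mp hb with rfl | hb2
    · exact .refl
    · exact .head ⟨Finset.mem_insert_self _ _, Finset.mem_insert_of_mem hf, htf⟩
        (mono _ _ (hS f hf b hb2))
  · rcases Finset.mem_insert.mp hb with rfl | hb2
    · exact .tail (mono _ _ (hS a ha2 f hf))
        ⟨Finset.mem_insert_of_mem hf, Finset.mem_insert_self _ _, G.touches_symm htf⟩
    · exact mono _ _ (hS a ha2 b hb2)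

lemma small_subgraph_aux (G : MetricGraph) (m l₀ : ℝ) (hm : 0 < m) (hl₀ : 0 < l₀)
    (e : G.E) :
    ∀ n (S : Finset G.E), Sᶜ.card ≤ n → e ∈ S → G.ConnectedEdges S →
      G.lenOf S < l₀ * (m + 1) ^ (S.card - 1) →
    ∃ T : Finset G.E, e ∈ T ∧ G.ConnectedEdges T ∧
      (∀ e' : G.E, e' ∉ T → G.AdjTo e' T → G.len e' / G.lenOf T > m) ∧
      G.lenOf T < l₀ * (m + 1) ^ (T.card - 1) := by
  intro n
  induction n with
  | zero =>
    intro S hcard heS hconn hlen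
    refine ⟨S, heS, hconn, ?_, hlen⟩
    intro e' he' _
    have hemp : Sᶜ = ∅ := Finset.card_eq_zero.mp (Nat.le_zero.mp hcard)
    have : e' ∈ Sᶜ := Finset.mem_compl.mpr he'
    rw [hemp] at this
    exact absurd this (Finset.notMem_empty e')
  | succ n ih =>
    intro S hcard heS hconn hlen
    by_cases hbig : ∀ e' : G.E, e' ∉ S → G.AdjTo e' S → m * G.lenOf S < G.len e'
    · refine ⟨S, heS, hconn, ?_, hlen⟩
      intro e' he' hadj
      exact (lt_div_iff₀ (G.lenOf_pos ⟨e, heS⟩)).mpr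
        (by linarith [hbig e' he' hadj])
    · push_neg at hbig
      obtain ⟨e', he'S, hadj, hle⟩ := hbig
      have hpos := G.lenOf_pos (S := S) ⟨e, heS⟩
      have hSne : S.Nonempty := ⟨e, heS⟩
      have hcard1 : 1 ≤ S.card := Finset.card_pos.mpr hSne
      have hcompl : (insert e' S)ᶜ.card ≤ n := by
        have : (insert e' S)ᶜ.card < Sᶜ.card := by
          apply Finset.card_lt_card
          constructor
          · intro x hx
            simp only [Finset.mem_compl, Finset.mem_insert] at hx ⊢
            exact fun h => hx (Or.inr h)
          · intro hsub
            exact (Finset.mem_compl.mp (hsub (Finset.mem_compl.mpr he'S)))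
              (Finset.mem_insert_self _ _)
        omega
      have hlenins : G.lenOf (insert e' S) = G.len e' + G.lenOf S :=
        Finset.sum_insert he'S
      have hcardins : (insert e' S).card = S.card + 1 := Finset.card_insert_of_notMem he'S
      refine ih (insert e' S) hcompl (Finset.mem_insert_of_mem heS)
        (G.connected_insert hconn hadj) ?_
      rw [hlenins, hcardins]
      have hpow : (m + 1) ^ (S.card + 1 - 1) = (m + 1) ^ (S.card - 1) * (m + 1) := by
        rw [← pow_succ]
        congr 1
        omega
      have hm1 : (0:ℝ) < m + 1 := by linarith
      calc G.len e' + G.lenOf S ≤ m * G.lenOf S + G.lenOf S := by linarith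
        _ = (m + 1) * G.lenOf S := by ring
        _ < (m + 1) * (l₀ * (m + 1) ^ (S.card - 1)) := by
            exact mul_lt_mul_of_pos_left hlen hm1
        _ = l₀ * (m + 1) ^ (S.card + 1 - 1) := by rw [hpow]; ring
  
end MetricGraph

/-- If a finite metric graph has an edge `e` of length less than `l₀`, then `e` is
contained in a connected subgraph `S` such that (1) every edge adjacent to `S` but not
in `S` satisfies `len e' / len S > m`, and (2) `len S < l₀ * (m+1)^(|S|-1)`. -/
theorem small_subgraph (G : MetricGraph) (m l₀ : ℝ) (hm : 0 < m) (hl₀ : 0 < l₀)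
    (e : G.E) (he : G.len e < l₀) :
    ∃ S : Finset G.E, e ∈ S ∧ G.ConnectedEdges S ∧
      (∀ e' : G.E, e' ∉ S → G.AdjTo e' S → G.len e' / G.lenOf S > m) ∧
      G.lenOf S < l₀ * (m + 1) ^ (S.card - 1) := by
  apply G.small_subgraph_aux m l₀ hm hl₀ e (({e} : Finset G.E)ᶜ.card) {e} le_rfl (Finset.mem_singleton_self e)
  · intro a ha b hb
    rw [Finset.mem_singleton] at ha hb
    subst ha; subst hb; exact .refl
  · simpa [MetricGraph.lenOf] using he
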